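/- Let k > n ≥ 2. There exists a deterministic adaptive strategy s of the codebreaker — a function s mapping each finite list of previous answers to a next query, such that every query produced is an injective code [n] → [k] — with the following property: for every injective secret code y : [n] → [k], in the play against y (where the t-th query is q_t := s(a_1, …, a_{t−1}) and the t-th answer is a_t := black(q_t, y)) there is some t ≤ (n − 2)·⌈log₂ n⌉ + k + 1 with q_t = y. In other words, Black-Peg AB-Mastermind with n positions and k > n colors can be solved with at most (n − 2)⌈log₂ n⌉ + k + 1 queries. -/

import Mathlib

/-- `black w x` is the number of positions where the codes `w` and `x` coincide. -/
def black {n k : ℕ} (w x : Fin n → Fin k) : ℕ :=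
  (Finset.univ.filter fun i => w i = x i).card

/-- `hist s y t` is the list of answers `[a_1, …, a_t]` produced in the play of the
adaptive strategy `s` against the secret code `y`: the `(t+1)`-st query is
`q_{t+1} = s (hist s y t)` and its answer is `a_{t+1} = black q_{t+1} y`. -/
def hist {n k : ℕ} (s : List ℕ → Fin n → Fin k) (y : Fin n → Fin k) : ℕ → List ℕ
  | 0 => []
  | t + 1 => hist s y t ++ [black (s (hist s y t)) y]

namespace MM

def rot (k : ℕ) (c : ℕ) (v : Fin k) : Fin k :=
  ⟨(v.1 + c) % k, Nat.mod_lt _ (Nat.lt_of_le_of_lt (Nat.zero_le _) v.2)⟩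

def em {n k : ℕ} (hk : n < k) (i : Fin n) : Fin k := ⟨i.1, i.2.trans hk⟩

def sig {n k : ℕ} (hk : n < k) (c : ℕ) : Fin n → Fin k := fun i => rot k c (em hk i)

def hyb {n k : ℕ} (hk : n < k) (c j : ℕ) : Fin n → Fin k := fun i =>
  if i.1 < j then rot k (c + (k-1)) (em hk i) else rot k c (em hk i)

def cntB (loc : List (ℕ × ℕ)) (v j : ℕ) : ℕ :=
  (loc.filter fun pr => decide (pr.2 = v ∧ pr.1 < j)).length

def aOf (n : ℕ) (as : List ℕ) (v : ℕ) : ℕ :=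
  if v < as.length then as.getD v 0 else n - as.sum

def e0 (as : List ℕ) : ℕ := if 0 ∈ as then as.idxOf 0 else as.length

def cur (k : ℕ) (as : List ℕ) (s : ℕ) : ℕ := (e0 as + s) % k

def shiftOf (loc : List (ℕ × ℕ)) (i : ℕ) : ℕ :=
  ((loc.find? fun pr => decide (pr.1 = i)).map Prod.snd).getD 0

def codeOf {n k : ℕ} (hk : n < k) (loc : List (ℕ × ℕ)) : Fin n → Fin k :=
  fun i => rot k (shiftOf loc i.1) (em hk i)

def remS (n k : ℕ) (as : List ℕ) (loc : List (ℕ × ℕ)) : List ℕ :=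
  (List.range k).flatMap fun v => List.replicate (aOf n as v - cntB loc v n) v

def unres (n : ℕ) (loc : List (ℕ × ℕ)) : List ℕ :=
  (List.range n).filter fun p => decide (∀ pr ∈ loc, pr.1 ≠ p)

def mkCands {n k : ℕ} (hk : n < k) (as : List ℕ) (loc : List (ℕ × ℕ)) :
    List (Fin n → Fin k) :=
  [codeOf hk (loc ++ [((unres n loc).getD 0 0, (remS n k as loc).getD 0 0),
                      ((unres n loc).getD 1 0, (remS n k as loc).getD 1 0)]),
   codeOf hk (loc ++ [((unres n loc).getD 0 0, (remS n k as loc).getD 1 0),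
                      ((unres n loc).getD 1 0, (remS n k as loc).getD 0 0)])].filter
    fun f => decide (Function.Injective f)

inductive St (n k : ℕ) where
  | scan (c : ℕ) (as : List ℕ)
  | srch (as : List ℕ) (loc : List (ℕ × ℕ)) (s lo hi : ℕ)
  | guess (cands : List (Fin n → Fin k))

variable {n k : ℕ}

def advance (hk : n < k) : List ℕ → List (ℕ × ℕ) → ℕ → ℕ → ℕ → St n k
  | _as, _loc, _s, _lo, 0 => .guess []
  | as, loc, s, lo, fuel+1 =>
    if n ≤ loc.length + 2 then .guess (mkCands hk as loc)
    else if aOf n as (cur k as s) ≤ cntB loc (cur k as s) n then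
      advance hk as loc (s+1) 0 fuel
    else if lo + 2 ≤ n then .srch as loc s lo n
    else advance hk as (loc ++ [(lo, cur k as s)]) s (lo+1) fuel

def query (hk : n < k) : St n k → (Fin n → Fin k)
  | .scan c _ => sig hk c
  | .srch as _ s lo hi => hyb hk (cur k as s) ((lo+hi)/2)
  | .guess cs => cs.headD (sig hk 0)

def update (hk : n < k) : St n k → ℕ → St n k
  | .scan c as, x =>
      if c + 2 < k then .scan (c+1) (as ++ [x])
      else advance hk (as ++ [x]) [] 1 0 (n+k)
  | .srch as loc s lo hi, x =>
      let c := cur k as s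
      let j := (lo+hi)/2
      let u := cntB loc ((c + (k-1)) % k) j + aOf n as c - x
      if cntB loc c n + 1 ≤ u then
        (if lo + 2 ≤ j then .srch as loc s lo j
         else advance hk as (loc ++ [(lo, c)]) s (lo+1) (n+k))
      else
        (if j + 2 ≤ hi then .srch as loc s j hi
         else advance hk as (loc ++ [(j, c)]) s (j+1) (n+k))
  | .guess cs, _ => .guess cs.tail

def init : St n k := .scan 0 []

def strat (hk : n < k) : List ℕ → (Fin n → Fin k) :=
  fun h => query hk (h.foldl (update hk) init)

def Phi (n : ℕ) : St n k → ℕ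
  | .scan c _ => (k - 1 - c) + (n-2) * Nat.clog 2 n + 2
  | .srch _ loc _ lo hi => Nat.clog 2 (hi - lo) + (n - 3 - loc.length) * Nat.clog 2 n + 2
  | .guess cs => cs.length

/-! ### basic modular arithmetic lemmas -/

lemma rot_eq_rot {c c' : ℕ} {v : Fin k} (h : c % k = c' % k) : rot k c v = rot k c' v := by
  unfold rot
  apply Fin.ext
  simp only
  rw [← Nat.add_mod_mod, ← Nat.add_mod_mod v.1 c', h]

lemma rot_inj_shift {c c' : ℕ} (hc : c < k) (hc' : c' < k) {v : Fin k}
    (h : rot k c v = rot k c' v) : c = c' := by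
  have : (v.1 + c) % k = (v.1 + c') % k := congrArg Fin.val h
  have h2 : c ≡ c' [MOD k] := Nat.ModEq.add_left_cancel' v.1 this
  rwa [Nat.ModEq, Nat.mod_eq_of_lt hc, Nat.mod_eq_of_lt hc'] at h2

lemma sig_inj (hk : n < k) (c : ℕ) : Function.Injective (sig hk c) := by
  intro i i' h
  have : (i.1 + c) % k = (i'.1 + c) % k := congrArg Fin.val h
  have h2 : (i:ℕ) ≡ (i':ℕ) [MOD k] := Nat.ModEq.add_right_cancel' c this
  rw [Nat.ModEq, Nat.mod_eq_of_lt (i.2.trans hk), Nat.mod_eq_of_lt (i'.2.trans hk)] at h2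
  exact Fin.ext h2

lemma cross_ne {a b c : ℕ} (hk0 : 0 < k)
    (h : (a + (c + (k-1))) % k = (b + c) % k) (ha : a < k) (hb1 : b + 1 < k) : a = b + 1 := by
  have h3 : a + (c + (k-1)) + 1 ≡ b + c + 1 [MOD k] := Nat.ModEq.add_right 1 h
  have he : a + (c + (k-1)) + 1 = (a + c) + k := by omega
  rw [he] at h3
  have h5 : (a + c) + k ≡ (a + c) + 0 [MOD k] :=
    Nat.ModEq.add_left (a + c) ((Nat.modEq_zero_iff_dvd).mpr dvd_rfl)
  have h6 : a + c ≡ (b + 1) + c [MOD k] := by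
    have h7 := h5.symm.trans h3
    rw [Nat.add_zero] at h7
    rwa [show b + c + 1 = (b + 1) + c from by omega] at h7
  have h7 : a ≡ b + 1 [MOD k] := Nat.ModEq.add_right_cancel' c h6
  rwa [Nat.ModEq, Nat.mod_eq_of_lt ha, Nat.mod_eq_of_lt hb1] at h7

lemma hyb_inj (hk : n < k) (c j : ℕ) : Function.Injective (hyb hk c j) := by
  have hk0 : 0 < k := Nat.lt_of_le_of_lt (Nat.zero_le _) hk
  intro i i' h
  unfold hyb at h
  apply Fin.ext
  by_cases h1 : i.1 < j <;> by_cases h2 : i'.1 < j <;>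
    simp only [h1, h2, if_true, if_false, if_pos, if_neg, not_false_iff] at h
  · exact congrArg Fin.val (sig_inj hk (c + (k-1)) h)
  · exfalso
    have hval : (i.1 + (c + (k-1))) % k = (i'.1 + c) % k := congrArg Fin.val h
    have := cross_ne hk0 hval (i.2.trans hk) (Nat.lt_of_le_of_lt i'.2 hk)
    omega
  · exfalso
    have hval : (i'.1 + (c + (k-1))) % k = (i.1 + c) % k := (congrArg Fin.val h).symm
    have := cross_ne hk0 hval (i'.2.trans hk) (Nat.lt_of_le_of_lt i.2 hk)
    omega
  · exact congrArg Fin.val (sig_inj hk c h)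

/-! ### the secret's shift function -/

def phiN (y : Fin n → Fin k) (p : ℕ) : ℕ :=
  if h : p < n then ((y ⟨p, h⟩).1 + (k - p)) % k else k

lemma phiN_lt (hk : n < k) (y : Fin n → Fin k) {p : ℕ} (hp : p < n) : phiN y p < k := by
  have hk0 : 0 < k := Nat.lt_of_le_of_lt (Nat.zero_le _) hk
  unfold phiN
  rw [dif_pos hp]
  exact Nat.mod_lt _ hk0

lemma y_eq_rot (hk : n < k) (y : Fin n → Fin k) (i : Fin n) :
    y i = rot k (phiN y i.1) (em hk i) := by
  have hk0 : 0 < k := Nat.lt_of_le_of_lt (Nat.zero_le _) hk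
  unfold phiN rot em
  apply Fin.ext
  simp only [i.2, dif_pos]
  rw [Nat.add_mod_mod]
  have h1 : (i:ℕ) + ((y i).1 + (k - i.1)) = (y i).1 + k := by
    have := i.2.trans hk; omega
  rw [show (⟨i.1, i.2⟩ : Fin n) = i from rfl, h1, Nat.add_mod_right,
    Nat.mod_eq_of_lt (y i).2]

lemma rot_eq_y_iff (hk : n < k) (y : Fin n → Fin k) {v : ℕ} (hv : v < k) (i : Fin n) :
    rot k v (em hk i) = y i ↔ v = phiN y i.1 := by
  constructor
  · intro h
    rw [y_eq_rot hk y i] at h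
    exact rot_inj_shift hv (phiN_lt hk y i.2) h
  · intro h; rw [h, ← y_eq_rot hk y i]

lemma rot_eq_y_iff' (hk : n < k) (y : Fin n → Fin k) {v : ℕ} (hv : v < k) (p : ℕ)
    (hp : p < n) : rot k v (em hk ⟨p, hp⟩) = y ⟨p, hp⟩ ↔ v = phiN y p :=
  rot_eq_y_iff hk y hv ⟨p, hp⟩

/-! ### counting -/

def Af (y : Fin n → Fin k) (v : ℕ) : ℕ :=
  ((Finset.range n).filter fun p => phiN y p = v).card

def Bel (y : Fin n → Fin k) (v j : ℕ) : ℕ :=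
  ((Finset.range n).filter fun p => phiN y p = v ∧ p < j).card

lemma card_univ_filter (P : Fin n → Prop) [DecidablePred P] :
    (Finset.univ.filter P).card
      = ((Finset.range n).filter fun p => ∃ h : p < n, P ⟨p, h⟩).card := by
  apply Finset.card_bij (fun (i : Fin n) _ => i.1)
  · intro i hi
    simp only [Finset.mem_filter, Finset.mem_univ, true_and] at hi
    simp only [Finset.mem_filter, Finset.mem_range]
    exact ⟨i.2, i.2, by simpa using hi⟩
  · intro a _ b _ hab
    exact Fin.ext hab
  · intro p hp
    simp only [Finset.mem_filter, Finset.mem_range] at hp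
    obtain ⟨hpn, hp2, hP⟩ := hp
    exact ⟨⟨p, hpn⟩, by simp [Finset.mem_filter, hP], rfl⟩

lemma black_sig (hk : n < k) (y : Fin n → Fin k) {c : ℕ} (hc : c < k) :
    black (sig hk c) y = Af y c := by
  unfold black Af
  rw [card_univ_filter]
  congr 1
  apply Finset.filter_congr
  intro p hp
  rw [Finset.mem_range] at hp
  constructor
  · rintro ⟨h, he⟩
    exact ((rot_eq_y_iff' hk y hc p h).mp he).symm
  · intro h
    exact ⟨hp, (rot_eq_y_iff' hk y hc p hp).mpr h.symm⟩

lemma black_hyb (hk : n < k) (y : Fin n → Fin k) {c j : ℕ} (hc : c < k) :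
    black (hyb hk c j) y
      = Bel y ((c + (k-1)) % k) j + (Af y c - Bel y c j) := by
  have hk0 : 0 < k := Nat.lt_of_le_of_lt (Nat.zero_le _) hk
  have hprev : (c + (k-1)) % k < k := Nat.mod_lt _ hk0
  unfold black
  rw [card_univ_filter]
  have hsplit : ((Finset.range n).filter fun p => ∃ h : p < n, hyb hk c j ⟨p,h⟩ = y ⟨p,h⟩)
      = ((Finset.range n).filter fun p => (phiN y p = (c + (k-1)) % k ∧ p < j))
        ∪ ((Finset.range n).filter fun p => (phiN y p = c ∧ ¬ p < j)) := by
    rw [← Finset.filter_or]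
    apply Finset.filter_congr
    intro p hp
    rw [Finset.mem_range] at hp
    unfold hyb
    constructor
    · rintro ⟨h, he⟩
      by_cases hj : p < j
      · rw [if_pos hj] at he
        rw [rot_eq_rot (Nat.mod_mod_of_dvd _ dvd_rfl).symm] at he
        exact Or.inl ⟨((rot_eq_y_iff' hk y hprev p h).mp he).symm, hj⟩
      · rw [if_neg hj] at he
        exact Or.inr ⟨((rot_eq_y_iff' hk y hc p h).mp he).symm, hj⟩
    · rintro (⟨he, hj⟩ | ⟨he, hj⟩)
      · refine ⟨hp, ?_⟩
        rw [if_pos hj, rot_eq_rot (Nat.mod_mod_of_dvd _ dvd_rfl).symm]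
        exact (rot_eq_y_iff' hk y hprev p hp).mpr he.symm
      · refine ⟨hp, ?_⟩
        rw [if_neg hj]
        exact (rot_eq_y_iff' hk y hc p hp).mpr he.symm
  rw [hsplit, Finset.card_union_of_disjoint]
  · have h2 : Bel y c j + ((Finset.range n).filter fun p => (phiN y p = c ∧ ¬ p < j)).card
        = Af y c := by
      unfold Bel Af
      rw [← Finset.filter_filter, ← Finset.filter_filter]
      exact Finset.card_filter_add_card_filter_not (fun p => p < j)
    have h3 : Bel y ((c + (k-1)) % k) j
        = ((Finset.range n).filter fun p => (phiN y p = (c + (k-1)) % k ∧ p < j)).card := rfl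
    omega
  · rw [Finset.disjoint_left]
    rintro p hp1 hp2
    rw [Finset.mem_filter] at hp1 hp2
    exact hp2.2.2 hp1.2.2

lemma sum_Af (hk : n < k) (y : Fin n → Fin k) :
    ∑ v ∈ Finset.range k, Af y v = n := by
  unfold Af
  rw [← Finset.card_eq_sum_card_fiberwise (fun p hp => by
    rw [Finset.mem_coe, Finset.mem_range] at hp ⊢
    exact phiN_lt hk y hp)]
  exact Finset.card_range n

lemma Bel_le_Af (y : Fin n → Fin k) (v j : ℕ) : Bel y v j ≤ Af y v := by
  apply Finset.card_le_card
  intro p hp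
  rw [Finset.mem_filter] at hp ⊢
  exact ⟨hp.1, hp.2.1⟩

lemma Bel_mono (y : Fin n → Fin k) (v : ℕ) {a b : ℕ} (h : a ≤ b) : Bel y v a ≤ Bel y v b := by
  apply Finset.card_le_card
  intro p hp
  rw [Finset.mem_filter] at hp ⊢
  exact ⟨hp.1, hp.2.1, hp.2.2.trans_le h⟩

lemma Bel_of_ge (y : Fin n → Fin k) (v : ℕ) {j : ℕ} (h : n ≤ j) : Bel y v j = Af y v := by
  unfold Bel Af
  congr 1
  apply Finset.filter_congr
  intro p hp
  rw [Finset.mem_range] at hp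
  exact ⟨fun h => h.1, fun h => ⟨h, by omega⟩⟩

lemma exists_between (y : Fin n → Fin k) {v a b : ℕ} (h : Bel y v a < Bel y v b) :
    ∃ p, a ≤ p ∧ p < b ∧ p < n ∧ phiN y p = v := by
  by_contra hc
  push_neg at hc
  have : ((Finset.range n).filter fun p => phiN y p = v ∧ p < b)
      ⊆ ((Finset.range n).filter fun p => phiN y p = v ∧ p < a) := by
    intro p hp
    rw [Finset.mem_filter, Finset.mem_range] at hp ⊢
    refine ⟨hp.1, hp.2.1, ?_⟩
    by_contra hlt
    push_neg at hlt
    exact absurd hp.2.1 (by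
      have := hc p hlt hp.2.2 hp.1
      exact this)
  exact absurd (Finset.card_le_card this) (by unfold Bel at h; omega)

lemma between_lt (y : Fin n → Fin k) {v a b p : ℕ} (ha : a ≤ p) (hb : p < b) (hp : p < n)
    (hv : phiN y p = v) : Bel y v a < Bel y v b := by
  apply Finset.card_lt_card
  constructor
  · intro q hq
    rw [Finset.mem_filter] at hq ⊢
    exact ⟨hq.1, hq.2.1, by omega⟩
  · intro hsub
    have hp2 : p ∈ (Finset.range n).filter fun q => phiN y q = v ∧ q < b := by
      rw [Finset.mem_filter, Finset.mem_range]; exact ⟨hp, hv, hb⟩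
    have := hsub hp2
    rw [Finset.mem_filter] at this
    omega

/-! ### list/array knowledge lemmas -/

lemma getD_map_range (f : ℕ → ℕ) {v m : ℕ} (h : v < m) :
    ((List.range m).map f).getD v 0 = f v := by
  rw [List.getD_eq_getElem?_getD]
  simp [List.getElem?_map, List.getElem?_range h]

lemma sum_map_range (f : ℕ → ℕ) (m : ℕ) :
    ((List.range m).map f).sum = ∑ v ∈ Finset.range m, f v := by
  induction m with
  | zero => simp
  | succ m ih =>
      rw [List.range_succ, List.map_append, List.sum_append, Finset.sum_range_succ, ih]
      simp

lemma length_le_sum {l : List ℕ} (h : ∀ x ∈ l, 1 ≤ x) : l.length ≤ l.sum := by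
  induction l with
  | nil => simp
  | cons a l ih =>
      simp only [List.length_cons, List.sum_cons]
      have := h a (List.mem_cons_self)
      have := ih (fun x hx => h x (List.mem_cons_of_mem _ hx))
      omega

lemma aOf_eq (hk : n < k) (y : Fin n → Fin k) {as : List ℕ}
    (hA : as = (List.range (k-1)).map (Af y)) {v : ℕ} (hv : v < k) :
    aOf n as v = Af y v := by
  have hk0 : 0 < k := Nat.lt_of_le_of_lt (Nat.zero_le _) hk
  have hlen : as.length = k - 1 := by rw [hA, List.length_map, List.length_range]
  have hsum := sum_Af hk y
  unfold aOf
  rw [hlen]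
  replace hsum : ∑ v ∈ Finset.range (k-1), Af y v + Af y (k-1) = n := by
    rw [← Finset.sum_range_succ, show (k-1)+1 = k from by omega]; exact hsum
  by_cases h : v < k - 1
  · rw [if_pos h, hA, getD_map_range _ h]
  · have hv1 : v = k - 1 := by omega
    rw [if_neg h, hA, sum_map_range, hv1]
    omega

lemma e0_spec (hk : n < k) (y : Fin n → Fin k) {as : List ℕ}
    (hA : as = (List.range (k-1)).map (Af y)) :
    e0 as < k ∧ Af y (e0 as) = 0 := by
  have hk0 : 0 < k := Nat.lt_of_le_of_lt (Nat.zero_le _) hk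
  have hlen : as.length = k - 1 := by rw [hA, List.length_map, List.length_range]
  have hsum := sum_Af hk y
  replace hsum : ∑ v ∈ Finset.range (k-1), Af y v + Af y (k-1) = n := by
    rw [← Finset.sum_range_succ, show (k-1)+1 = k from by omega]; exact hsum
  unfold e0
  by_cases h0 : 0 ∈ as
  · rw [if_pos h0]
    have hidx : as.idxOf 0 < as.length := List.idxOf_lt_length_iff.mpr h0
    have hval : as[as.idxOf 0] = 0 := List.getElem_idxOf hidx
    have : Af y (as.idxOf 0) = 0 := by
      have h3 : as[as.idxOf 0] = ((List.range (k-1)).map (Af y))[as.idxOf 0]'(by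
          rw [← hA]; exact hidx) := List.getElem_of_eq hA hidx
      rw [List.getElem_map, List.getElem_range] at h3
      rw [← h3]; exact hval
    exact ⟨by omega, this⟩
  · rw [if_neg h0, hlen]
    have hall : ∀ x ∈ as, 1 ≤ x := by
      intro x hx
      rcases Nat.eq_zero_or_pos x with rfl | h
      · exact absurd hx h0
      · exact h
    have hls := length_le_sum hall
    rw [hlen, hA, sum_map_range] at hls
    exact ⟨by omega, by omega⟩

/-! ### located-list counting -/

lemma cnt_core (y : Fin n → Fin k) (loc : List (ℕ × ℕ)) (v : ℕ) (P : ℕ → Prop)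
    [DecidablePred P]
    (corr : ∀ pr ∈ loc, pr.1 < n ∧ phiN y pr.1 = pr.2)
    (nd : (loc.map Prod.fst).Nodup) :
    (loc.filter fun pr => decide (pr.2 = v ∧ P pr.1)).length
      = ((Finset.range n).filter fun p => phiN y p = v ∧ P p ∧ p ∈ loc.map Prod.fst).card := by
  induction loc with
  | nil => simp
  | cons hd tl ih =>
      obtain ⟨h1, h2⟩ := corr hd (List.mem_cons_self)
      rw [List.map_cons, List.nodup_cons] at nd
      have ihe := ih (fun pr hpr => corr pr (List.mem_cons_of_mem _ hpr)) nd.2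
      rw [List.filter_cons, List.map_cons]
      by_cases hc : hd.2 = v ∧ P hd.1
      · rw [if_pos (by simpa using hc)]
        have hset : ((Finset.range n).filter
              fun p => phiN y p = v ∧ P p ∧ p ∈ (hd.1 :: tl.map Prod.fst))
            = insert hd.1 ((Finset.range n).filter
              fun p => phiN y p = v ∧ P p ∧ p ∈ tl.map Prod.fst) := by
          ext p
          simp only [Finset.mem_filter, Finset.mem_insert, Finset.mem_range, List.mem_cons]
          constructor
          · rintro ⟨hpn, hφ, hP, (rfl | hmem)⟩
            · exact Or.inl rfl
            · exact Or.inr ⟨hpn, hφ, hP, hmem⟩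
          · rintro (rfl | ⟨hpn, hφ, hP, hmem⟩)
            · exact ⟨h1, by rw [h2, hc.1], hc.2, Or.inl rfl⟩
            · exact ⟨hpn, hφ, hP, Or.inr hmem⟩
        rw [hset, Finset.card_insert_of_notMem (by
          rw [Finset.mem_filter]
          rintro ⟨-, -, -, hmem⟩
          exact nd.1 hmem)]
        rw [List.length_cons, ihe]
      · rw [if_neg (by simpa using hc)]
        have hset : ((Finset.range n).filter
              fun p => phiN y p = v ∧ P p ∧ p ∈ (hd.1 :: tl.map Prod.fst))
            = ((Finset.range n).filter
              fun p => phiN y p = v ∧ P p ∧ p ∈ tl.map Prod.fst) := by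
          apply Finset.filter_congr
          intro p hp
          constructor
          · rintro ⟨hφ, hP, hmem⟩
            rcases List.mem_cons.mp hmem with he | hmem'
            · exact absurd ⟨by rw [← h2, ← he]; exact hφ, he ▸ hP⟩ hc
            · exact ⟨hφ, hP, hmem'⟩
          · rintro ⟨hφ, hP, hmem⟩
            exact ⟨hφ, hP, List.mem_cons_of_mem _ hmem⟩
        rw [hset, ihe]

lemma cntB_full (y : Fin n → Fin k) {loc : List (ℕ × ℕ)} {v : ℕ} (j : ℕ)
    (corr : ∀ pr ∈ loc, pr.1 < n ∧ phiN y pr.1 = pr.2)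
    (nd : (loc.map Prod.fst).Nodup)
    (hfull : ∀ p, p < n → phiN y p = v → p ∈ loc.map Prod.fst) :
    cntB loc v j = Bel y v j := by
  unfold cntB Bel
  rw [cnt_core y loc v (· < j) corr nd]
  congr 1
  apply Finset.filter_congr
  intro p hp
  rw [Finset.mem_range] at hp
  exact ⟨fun h => ⟨h.1, h.2.1⟩, fun h => ⟨h.1, h.2, hfull p hp h.1⟩⟩

lemma cntB_zero (y : Fin n → Fin k) {loc : List (ℕ × ℕ)} {v : ℕ} (j : ℕ)
    (corr : ∀ pr ∈ loc, pr.1 < n ∧ phiN y pr.1 = pr.2)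
    (hv : Af y v = 0) : cntB loc v j = 0 := by
  unfold cntB
  rw [List.length_eq_zero_iff]
  rw [List.filter_eq_nil_iff]
  rintro pr hpr hdec
  rw [decide_eq_true_eq] at hdec
  obtain ⟨hpn, hφ⟩ := corr pr hpr
  have hmem : pr.1 ∈ (Finset.range n).filter fun p => phiN y p = v := by
    rw [Finset.mem_filter, Finset.mem_range]
    exact ⟨hpn, by rw [hφ, hdec.1]⟩
  rw [Finset.card_eq_zero.mp hv] at hmem
  exact absurd hmem (Finset.notMem_empty _)

lemma cntS_cur (y : Fin n → Fin k) {loc : List (ℕ × ℕ)} {v lo : ℕ}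
    (corr : ∀ pr ∈ loc, pr.1 < n ∧ phiN y pr.1 = pr.2)
    (nd : (loc.map Prod.fst).Nodup)
    (curI : ∀ p, p < lo → phiN y p = v → p ∈ loc.map Prod.fst)
    (curHi : ∀ pr ∈ loc, pr.2 = v → pr.1 < lo) :
    cntB loc v n = Bel y v lo := by
  unfold cntB Bel
  rw [cnt_core y loc v (· < n) corr nd]
  congr 1
  apply Finset.filter_congr
  intro p hp
  rw [Finset.mem_range] at hp
  constructor
  · rintro ⟨hφ, -, hmem⟩
    rw [List.mem_map] at hmem
    obtain ⟨pr, hpr, rfl⟩ := hmem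
    have := (corr pr hpr).2
    exact ⟨hφ, curHi pr hpr (by rw [← this, hφ])⟩
  · rintro ⟨hφ, hlt⟩
    exact ⟨hφ, hp, curI p hlt hφ⟩

/-! ### shift indexing -/

lemma shift_idx_inj {e t t' : ℕ} (ht : t < k) (ht' : t' < k)
    (h : (e + t) % k = (e + t') % k) : t = t' := by
  have h2 : t ≡ t' [MOD k] := Nat.ModEq.add_left_cancel' e h
  rwa [Nat.ModEq, Nat.mod_eq_of_lt ht, Nat.mod_eq_of_lt ht'] at h2

lemma shift_decomp {e v : ℕ} (he : e < k) (hv : v < k) (hne : v ≠ e) :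
    ∃ t, 1 ≤ t ∧ t < k ∧ v = (e + t) % k := by
  have hk0 : 0 < k := Nat.lt_of_le_of_lt (Nat.zero_le _) he
  refine ⟨(v + (k - e)) % k, ?_, Nat.mod_lt _ hk0, ?_⟩
  · rcases Nat.eq_zero_or_pos ((v + (k - e)) % k) with h | h
    · exfalso
      have h2 : (e + (v + (k - e)) % k) % k = (e + 0) % k := by rw [h]
      rw [Nat.add_mod_mod, show e + (v + (k-e)) = v + k from by omega,
        Nat.add_mod_right, Nat.mod_eq_of_lt hv, Nat.add_zero, Nat.mod_eq_of_lt he] at h2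
      exact hne h2
    · exact h
  · rw [Nat.add_mod_mod, show e + (v + (k-e)) = v + k from by omega,
      Nat.add_mod_right, Nat.mod_eq_of_lt hv]

lemma shiftOf_eq {L' : List (ℕ × ℕ)} {i v : ℕ}
    (hex : ∃ pr ∈ L', pr.1 = i)
    (hall : ∀ pr ∈ L', pr.1 = i → pr.2 = v) : shiftOf L' i = v := by
  unfold shiftOf
  obtain ⟨pr, hpr, hpri⟩ := hex
  have hsome : (L'.find? fun pr => decide (pr.1 = i)).isSome := by
    rw [List.find?_isSome]
    exact ⟨pr, hpr, by simpa using hpri⟩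
  obtain ⟨pr', hfind⟩ := Option.isSome_iff_exists.mp hsome
  have h1 : pr'.1 = i := by simpa using List.find?_some hfind
  have h2 : pr' ∈ L' := List.mem_of_find?_eq_some hfind
  rw [hfind]
  exact hall pr' h2 h1

lemma count_flatMap_replicate (r : ℕ → ℕ) (v0 : ℕ) (m : ℕ) :
    ((List.range m).flatMap fun v => List.replicate (r v) v).count v0
      = if v0 < m then r v0 else 0 := by
  induction m with
  | zero => simp
  | succ m ih =>
      rw [List.range_succ, List.flatMap_append, List.count_append, ih]
      simp only [List.flatMap_cons, List.flatMap_nil, List.append_nil, List.count_replicate]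
      by_cases h : v0 = m
      · subst h
        simp [Nat.lt_irrefl, Nat.lt_succ_self]
      · have h2 : (v0 < m + 1) ↔ (v0 < m) := by omega
        simp [h, Ne.symm h, h2]

lemma list_range_toFinset (m : ℕ) : (List.range m).toFinset = Finset.range m := by
  ext x
  simp

/-! ### the invariants -/

structure AdvPre (y : Fin n → Fin k) (as : List ℕ) (loc : List (ℕ × ℕ))
    (s lo : ℕ) : Prop where
  asI : as = (List.range (k-1)).map (Af y)
  corr : ∀ pr ∈ loc, pr.1 < n ∧ phiN y pr.1 = pr.2
  nd : (loc.map Prod.fst).Nodup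
  fut : ∀ pr ∈ loc, ∃ t, 1 ≤ t ∧ t ≤ s ∧ pr.2 = (e0 as + t) % k
  s1 : 1 ≤ s
  sk : s < k
  full : ∀ p t, p < n → 1 ≤ t → t < s → phiN y p = (e0 as + t) % k → p ∈ loc.map Prod.fst
  curI : ∀ p, p < lo → phiN y p = cur k as s → p ∈ loc.map Prod.fst
  curHi : ∀ pr ∈ loc, pr.2 = cur k as s → pr.1 < lo
  lenle : loc.length + 2 ≤ n

def Inv (y : Fin n → Fin k) : St n k → Prop
  | .scan c as => c + 1 < k ∧ as = (List.range c).map (Af y)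
  | .srch as loc s lo hi =>
      AdvPre y as loc s lo ∧ lo + 2 ≤ hi ∧ hi ≤ n ∧ loc.length + 3 ≤ n ∧
        ∃ p, lo ≤ p ∧ p < hi ∧ p < n ∧ phiN y p = cur k as s
  | .guess cs => y ∈ cs

/-! ### the candidate lemma -/

lemma cnt_le_Af (y : Fin n → Fin k) {loc : List (ℕ × ℕ)} {v : ℕ}
    (corr : ∀ pr ∈ loc, pr.1 < n ∧ phiN y pr.1 = pr.2)
    (nd : (loc.map Prod.fst).Nodup) :
    cntB loc v n ≤ Af y v := by
  unfold cntB
  rw [cnt_core y loc v (· < n) corr nd]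
  apply Finset.card_le_card
  intro x hx
  rw [Finset.mem_filter] at hx ⊢
  exact ⟨hx.1, hx.2.1⟩

lemma mem_mkCands (hk : n < k) (y : Fin n → Fin k) (hy : Function.Injective y)
    {as : List ℕ} {loc : List (ℕ × ℕ)} {s lo : ℕ}
    (H : AdvPre y as loc s lo) (hlen : n = loc.length + 2) :
    y ∈ mkCands hk as loc := by
  have hk0 : 0 < k := Nat.lt_of_le_of_lt (Nat.zero_le _) hk
  set L := loc.map Prod.fst with hL
  -- the located positions as a finset
  have hLsub : L.toFinset ⊆ Finset.range n := by
    intro x hx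
    rw [List.mem_toFinset, hL, List.mem_map] at hx
    obtain ⟨pr, hpr, rfl⟩ := hx
    rw [Finset.mem_range]
    exact (H.corr pr hpr).1
  have hLcard : L.toFinset.card = loc.length := by
    rw [List.toFinset_card_of_nodup H.nd, List.length_map]
  -- the unresolved positions
  have hunodup : (unres n loc).Nodup := List.Nodup.filter _ List.nodup_range
  have humem : ∀ x, x ∈ unres n loc ↔ (x < n ∧ x ∉ L) := by
    intro x
    unfold unres
    rw [List.mem_filter, List.mem_range]
    constructor
    · rintro ⟨h1, h2⟩
      rw [decide_eq_true_eq] at h2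
      refine ⟨h1, fun hmem => ?_⟩
      rw [hL, List.mem_map] at hmem
      obtain ⟨pr, hpr, hpr2⟩ := hmem
      exact h2 pr hpr hpr2
    · rintro ⟨h1, h2⟩
      refine ⟨h1, ?_⟩
      rw [decide_eq_true_eq]
      intro pr hpr hpr2
      exact h2 (by rw [hL, List.mem_map]; exact ⟨pr, hpr, hpr2⟩)
  have huset : (unres n loc).toFinset = Finset.range n \ L.toFinset := by
    ext x
    rw [List.mem_toFinset, humem, Finset.mem_sdiff, Finset.mem_range, List.mem_toFinset]
  have hulen : (unres n loc).length = 2 := by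
    rw [← List.toFinset_card_of_nodup hunodup, huset, Finset.card_sdiff_of_subset hLsub,
      Finset.card_range, hLcard]
    omega
  obtain ⟨p, q, hpq⟩ := List.length_eq_two.mp hulen
  have hpmem : (p ∈ unres n loc) := by rw [hpq]; exact List.mem_cons_self
  have hqmem : (q ∈ unres n loc) := by rw [hpq]; simp
  have hp := (humem p).mp hpmem
  have hq := (humem q).mp hqmem
  have hpqne : p ≠ q := by
    rw [hpq] at hunodup
    rcases List.nodup_cons.mp hunodup with ⟨h1, -⟩
    intro h; exact h1 (by rw [h]; simp)
  have hcover : ∀ x, x < n → x ∉ L → x = p ∨ x = q := by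
    intro x h1 h2
    have : x ∈ unres n loc := (humem x).mpr ⟨h1, h2⟩
    rw [hpq] at this
    simpa using this
  -- remaining-shift counts
  have haOf : ∀ v, v < k → aOf n as v = Af y v := fun v hv => aOf_eq hk y H.asI hv
  have hcnt : ∀ v, cntB loc v n ≤ Af y v := fun v => cnt_le_Af y H.corr H.nd
  have hrval : ∀ v0, v0 < k → Af y v0 - cntB loc v0 n
      = (if phiN y p = v0 then 1 else 0) + (if phiN y q = v0 then 1 else 0) := by
    intro v0 hv0
    have hc : cntB loc v0 n
        = ((Finset.range n).filter fun x => phiN y x = v0 ∧ x ∈ L).card := by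
      unfold cntB
      rw [cnt_core y loc v0 (· < n) H.corr H.nd]
      congr 1
      apply Finset.filter_congr
      intro x hx
      rw [Finset.mem_range] at hx
      exact ⟨fun h => ⟨h.1, h.2.2⟩, fun h => ⟨h.1, hx, h.2⟩⟩
    have hsplit : ((Finset.range n).filter fun x => phiN y x = v0 ∧ x ∈ L).card
        + ((Finset.range n).filter fun x => phiN y x = v0 ∧ x ∉ L).card = Af y v0 := by
      unfold Af
      rw [← Finset.filter_filter, ← Finset.filter_filter]
      exact Finset.card_filter_add_card_filter_not (fun x => x ∈ L)
    have hpairset : ((Finset.range n).filter fun x => phiN y x = v0 ∧ x ∉ L)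
        = ({p, q} : Finset ℕ).filter fun x => phiN y x = v0 := by
      ext x
      rw [Finset.mem_filter, Finset.mem_filter, Finset.mem_range, Finset.mem_insert,
        Finset.mem_singleton]
      constructor
      · rintro ⟨h1, h2, h3⟩
        exact ⟨hcover x h1 h3, h2⟩
      · rintro ⟨(rfl | rfl), h2⟩
        · exact ⟨hp.1, h2, hp.2⟩
        · exact ⟨hq.1, h2, hq.2⟩
    have hpcard : (({p, q} : Finset ℕ).filter fun x => phiN y x = v0).card
        = (if phiN y p = v0 then 1 else 0) + (if phiN y q = v0 then 1 else 0) := by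
      rw [Finset.filter_insert, Finset.filter_singleton]
      by_cases h1 : phiN y p = v0 <;> by_cases h2 : phiN y q = v0 <;>
        simp [h1, h2, hpqne]
    rw [hc]
    rw [hpairset, hpcard] at hsplit
    omega
  -- the remaining-shift list
  have hrlen : (remS n k as loc).length = 2 := by
    unfold remS
    rw [List.length_flatMap]
    have : List.map (fun a => (List.replicate (aOf n as a - cntB loc a n) a).length)
        (List.range k) = List.map (fun v => aOf n as v - cntB loc v n) (List.range k) := by
      apply List.map_congr_left
      intro v _
      simp
    rw [this, sum_map_range]
    have h1 : ∀ v ∈ Finset.range k, aOf n as v - cntB loc v n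
        = (if phiN y p = v then 1 else 0) + (if phiN y q = v then 1 else 0) := by
      intro v hv
      rw [Finset.mem_range] at hv
      rw [haOf v hv]
      exact hrval v hv
    rw [Finset.sum_congr rfl h1, Finset.sum_add_distrib]
    have hφp : phiN y p < k := phiN_lt hk y hp.1
    have hφq : phiN y q < k := phiN_lt hk y hq.1
    rw [Finset.sum_ite_eq (Finset.range k) (phiN y p) (fun _ => 1),
      Finset.sum_ite_eq (Finset.range k) (phiN y q) (fun _ => 1)]
    rw [if_pos (Finset.mem_range.mpr hφp), if_pos (Finset.mem_range.mpr hφq)]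
  obtain ⟨v, w, hvw⟩ := List.length_eq_two.mp hrlen
  -- counts in the remaining-shift list
  have hcount : ∀ v0, v0 < k → (remS n k as loc).count v0
      = (if phiN y p = v0 then 1 else 0) + (if phiN y q = v0 then 1 else 0) := by
    intro v0 hv0
    unfold remS
    rw [count_flatMap_replicate, if_pos hv0, haOf v0 hv0]
    exact hrval v0 hv0
  have hφp : phiN y p < k := phiN_lt hk y hp.1
  have hφq : phiN y q < k := phiN_lt hk y hq.1
  have hvwk : v < k ∧ w < k := by
    have hg : ∀ x ∈ remS n k as loc, x < k := by
      intro x hx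
      unfold remS at hx
      rw [List.mem_flatMap] at hx
      obtain ⟨a, ha, hxa⟩ := hx
      rw [List.eq_of_mem_replicate hxa]
      exact List.mem_range.mp ha
    exact ⟨hg v (by rw [hvw]; simp), hg w (by rw [hvw]; simp)⟩
  have hpin : phiN y p = v ∨ phiN y p = w := by
    have h1 : 0 < (remS n k as loc).count (phiN y p) := by
      rw [hcount _ hφp, if_pos rfl]
      omega
    rw [hvw] at h1
    simpa using List.count_pos_iff.mp h1
  have hqin : phiN y q = v ∨ phiN y q = w := by
    have h1 : 0 < (remS n k as loc).count (phiN y q) := by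
      rw [hcount _ hφq, if_pos rfl]
      omega
    rw [hvw] at h1
    simpa using List.count_pos_iff.mp h1
  have hvin : v = phiN y p ∨ v = phiN y q := by
    have h1 : 0 < (remS n k as loc).count v := by
      rw [hvw]
      exact List.count_pos_iff.mpr (by simp)
    rw [hcount v hvwk.1] at h1
    by_cases h2 : phiN y p = v
    · exact Or.inl h2.symm
    · by_cases h3 : phiN y q = v
      · exact Or.inr h3.symm
      · rw [if_neg h2, if_neg h3] at h1; omega
  have hwin : w = phiN y p ∨ w = phiN y q := by
    have h1 : 0 < (remS n k as loc).count w := by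
      rw [hvw]
      exact List.count_pos_iff.mpr (by simp)
    rw [hcount w hvwk.2] at h1
    by_cases h2 : phiN y p = w
    · exact Or.inl h2.symm
    · by_cases h3 : phiN y q = w
      · exact Or.inr h3.symm
      · rw [if_neg h2, if_neg h3] at h1; omega
  have hmm : (phiN y p = v ∧ phiN y q = w) ∨ (phiN y p = w ∧ phiN y q = v) := by
    omega
  -- the code built from a full correct location list is y
  have hcode : ∀ (vp vq : ℕ), vp = phiN y p → vq = phiN y q →
      codeOf hk (loc ++ [(p, vp), (q, vq)]) = y := by
    rintro vp vq rfl rfl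
    funext i
    unfold codeOf
    have hso : shiftOf (loc ++ [(p, phiN y p), (q, phiN y q)]) i.1 = phiN y i.1 := by
      apply shiftOf_eq
      · by_cases hm : i.1 ∈ L
        · rw [hL, List.mem_map] at hm
          obtain ⟨pr, hpr, hpr2⟩ := hm
          exact ⟨pr, List.mem_append_left _ hpr, hpr2⟩
        · rcases hcover i.1 i.2 hm with h | h
          · exact ⟨(p, phiN y p), by simp, h.symm⟩
          · exact ⟨(q, phiN y q), by simp, h.symm⟩
      · rintro pr hpr hpri
        rcases List.mem_append.mp hpr with hm | hm
        · rw [← hpri]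
          exact ((H.corr pr hm).2).symm
        · simp only [List.mem_cons, List.mem_singleton, List.not_mem_nil, or_false] at hm
          rcases hm with rfl | rfl
          · simp only [← hpri]
          · simp only [← hpri]
    rw [hso, ← y_eq_rot hk y i]
  -- final assembly
  have hu0 : (unres n loc).getD 0 0 = p := by rw [hpq]; rfl
  have hu1 : (unres n loc).getD 1 0 = q := by rw [hpq]; rfl
  have hr0 : (remS n k as loc).getD 0 0 = v := by rw [hvw]; rfl
  have hr1 : (remS n k as loc).getD 1 0 = w := by rw [hvw]; rfl
  unfold mkCands
  refine List.mem_filter.mpr ⟨?_, by simpa using hy⟩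
  rw [hu0, hu1, hr0, hr1]
  rcases hmm with ⟨h1, h2⟩ | ⟨h1, h2⟩
  · rw [hcode v w h1.symm h2.symm]
    simp
  · rw [hcode w v h1.symm h2.symm]
    simp

/-! ### fiber lemmas -/

lemma fiber_sub (y : Fin n → Fin k) {loc : List (ℕ × ℕ)} {v : ℕ}
    (corr : ∀ pr ∈ loc, pr.1 < n ∧ phiN y pr.1 = pr.2)
    (nd : (loc.map Prod.fst).Nodup)
    (h : Af y v ≤ cntB loc v n) :
    ∀ p, p < n → phiN y p = v → p ∈ loc.map Prod.fst := by
  have hc : cntB loc v n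
      = ((Finset.range n).filter fun p => phiN y p = v ∧ (fun q => q < n) p
          ∧ p ∈ loc.map Prod.fst).card := by
    unfold cntB
    exact cnt_core y loc v (· < n) corr nd
  have hsub : ((Finset.range n).filter fun p => phiN y p = v ∧ (fun q => q < n) p
        ∧ p ∈ loc.map Prod.fst) ⊆ ((Finset.range n).filter fun p => phiN y p = v) := by
    intro x hx
    rw [Finset.mem_filter] at hx ⊢
    exact ⟨hx.1, hx.2.1⟩
  have heq := Finset.eq_of_subset_of_card_le hsub (by
    rw [← hc]
    exact h)
  intro p hp hφ
  have hmem : p ∈ (Finset.range n).filter fun p => phiN y p = v := by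
    rw [Finset.mem_filter, Finset.mem_range]
    exact ⟨hp, hφ⟩
  rw [← heq, Finset.mem_filter] at hmem
  exact hmem.2.2.2

lemma exists_unlocated_fiber (y : Fin n → Fin k) {loc : List (ℕ × ℕ)} {v : ℕ}
    (corr : ∀ pr ∈ loc, pr.1 < n ∧ phiN y pr.1 = pr.2)
    (nd : (loc.map Prod.fst).Nodup)
    (h : cntB loc v n < Af y v) :
    ∃ p, p < n ∧ phiN y p = v ∧ p ∉ loc.map Prod.fst := by
  by_contra hc
  push_neg at hc
  have hsub : ((Finset.range n).filter fun p => phiN y p = v)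
      ⊆ ((Finset.range n).filter fun p => phiN y p = v ∧ (fun q => q < n) p
          ∧ p ∈ loc.map Prod.fst) := by
    intro x hx
    rw [Finset.mem_filter, Finset.mem_range] at hx
    rw [Finset.mem_filter, Finset.mem_range]
    exact ⟨hx.1, hx.2, hx.1, hc x hx.1 hx.2⟩
  have := Finset.card_le_card hsub
  rw [← cnt_core y loc v (· < n) corr nd] at this
  unfold cntB at h
  unfold Af at h
  omega

lemma adv_locate (y : Fin n → Fin k) {as : List ℕ} {loc : List (ℕ × ℕ)} {s lo : ℕ}
    (H : AdvPre y as loc s lo) (hlon : lo < n)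
    (hφ : phiN y lo = cur k as s) (hunl : lo ∉ loc.map Prod.fst)
    (hlen3 : loc.length + 3 ≤ n) :
    AdvPre y as (loc ++ [(lo, cur k as s)]) s (lo + 1) :=
  { asI := H.asI
    corr := by
      intro pr hpr
      rcases List.mem_append.mp hpr with hm | hm
      · exact H.corr pr hm
      · simp only [List.mem_singleton] at hm
        subst hm
        exact ⟨hlon, hφ⟩
    nd := by
      rw [List.map_append]
      simp only [List.map_cons, List.map_nil]
      rw [List.nodup_append]
      refine ⟨H.nd, List.nodup_singleton _, ?_⟩
      intro a ha b hb
      simp only [List.mem_singleton] at hb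
      subst hb
      intro hab; subst hab
      exact hunl ha
    fut := by
      intro pr hpr
      rcases List.mem_append.mp hpr with hm | hm
      · exact H.fut pr hm
      · simp only [List.mem_singleton] at hm
        subst hm
        exact ⟨s, H.s1, le_refl s, rfl⟩
    s1 := H.s1
    sk := H.sk
    full := by
      intro p t hpn ht1 hts hφ2
      rw [List.map_append]
      exact List.mem_append_left _ (H.full p t hpn ht1 hts hφ2)
    curI := by
      intro p hplt hφ2
      rw [List.map_append]
      rcases Nat.lt_or_ge p lo with hlt | hge
      · exact List.mem_append_left _ (H.curI p hlt hφ2)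
      · have : p = lo := by omega
        subst this
        simp
    curHi := by
      intro pr hpr hcon
      rcases List.mem_append.mp hpr with hm | hm
      · have := H.curHi pr hm hcon
        omega
      · simp only [List.mem_singleton] at hm
        subst hm
        simp only
        omega
    lenle := by
      rw [List.length_append, List.length_cons, List.length_nil]
      omega }

/-! ### correctness of `advance` -/

lemma adv_ok (hk : n < k) (y : Fin n → Fin k) (hy : Function.Injective y) :
    ∀ (fuel : ℕ) (as : List ℕ) (loc : List (ℕ × ℕ)) (s lo : ℕ),
      AdvPre y as loc s lo →
      (k - s) + (n - loc.length) ≤ fuel →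
      Inv y (advance hk as loc s lo fuel) ∧
        Phi n (advance hk as loc s lo fuel)
          ≤ (n - 2 - loc.length) * Nat.clog 2 n + 2 := by
  intro fuel
  induction fuel with
  | zero =>
      intro as loc s lo H hf
      exfalso
      have := H.sk
      omega
  | succ fuel ih =>
      intro as loc s lo H hf
      have hk0 : 0 < k := Nat.lt_of_le_of_lt (Nat.zero_le _) hk
      simp only [advance]
      by_cases h1 : n ≤ loc.length + 2
      · rw [if_pos h1]
        refine ⟨mem_mkCands hk y hy H (by have := H.lenle; omega), ?_⟩
        have hle : (mkCands hk as loc).length ≤ 2 := by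
          unfold mkCands
          have := List.length_filter_le (fun (f : Fin n → Fin k) => decide (Function.Injective f))
            [codeOf hk (loc ++ [((unres n loc).getD 0 0, (remS n k as loc).getD 0 0),
                      ((unres n loc).getD 1 0, (remS n k as loc).getD 1 0)]),
             codeOf hk (loc ++ [((unres n loc).getD 0 0, (remS n k as loc).getD 1 0),
                      ((unres n loc).getD 1 0, (remS n k as loc).getD 0 0)])]
          simpa using this
        simp only [Phi]
        omega
      · rw [if_neg h1]
        have hlen3 : loc.length + 3 ≤ n := by have := H.lenle; omega
        have he0 := e0_spec hk y H.asI
        have hcur : cur k as s < k := Nat.mod_lt _ hk0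
        have haOfc : aOf n as (cur k as s) = Af y (cur k as s) := aOf_eq hk y H.asI hcur
        by_cases h2 : aOf n as (cur k as s) ≤ cntB loc (cur k as s) n
        · rw [if_pos h2]
          have hfull2 := fiber_sub (v := cur k as s) y H.corr H.nd (by omega)
          -- there is an unresolved position, whose shift index exceeds s
          have hexu : ∃ p, p < n ∧ p ∉ loc.map Prod.fst := by
            by_contra hcon
            push_neg at hcon
            have hsub : Finset.range n ⊆ (loc.map Prod.fst).toFinset := by
              intro x hx
              rw [Finset.mem_range] at hx
              rw [List.mem_toFinset]
              exact hcon x hx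
            have := Finset.card_le_card hsub
            rw [Finset.card_range, List.toFinset_card_of_nodup H.nd, List.length_map] at this
            omega
          obtain ⟨p0, hp0n, hp0u⟩ := hexu
          have hφp0 : phiN y p0 < k := phiN_lt hk y hp0n
          have hne : phiN y p0 ≠ e0 as := by
            intro hcon
            have : 0 < Af y (e0 as) := Finset.card_pos.mpr ⟨p0, by
              rw [Finset.mem_filter, Finset.mem_range]
              exact ⟨hp0n, hcon⟩⟩
            omega
          obtain ⟨t, ht1, htk, hteq⟩ := shift_decomp he0.1 hφp0 hne
          have hts : s + 1 ≤ t := by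
            by_contra hcon
            push_neg at hcon
            rcases Nat.lt_or_ge t s with hlt | hge
            · exact hp0u (H.full p0 t hp0n ht1 hlt hteq)
            · have hts2 : t = s := by omega
              exact hp0u (hfull2 p0 hp0n (by rw [hteq, hts2]; rfl))
          have Hnew : AdvPre y as loc (s+1) 0 :=
            { asI := H.asI
              corr := H.corr
              nd := H.nd
              fut := by
                intro pr hpr
                obtain ⟨t', h1', h2', h3'⟩ := H.fut pr hpr
                exact ⟨t', h1', by omega, h3'⟩
              s1 := by omega
              sk := by omega
              full := by
                intro p t' hpn ht1' hts' hφ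
                rcases Nat.lt_or_ge t' s with hlt | hge
                · exact H.full p t' hpn ht1' hlt hφ
                · have ht' : t' = s := by omega
                  exact hfull2 p hpn (by rw [hφ, ht']; rfl)
              curI := by intro p hp hφ; exact absurd hp (by omega)
              curHi := by
                intro pr hpr hcon
                obtain ⟨t', h1', h2', h3'⟩ := H.fut pr hpr
                rw [h3'] at hcon
                have := shift_idx_inj (by omega : t' < k) (by omega : s + 1 < k) hcon
                omega
              lenle := H.lenle }
          have := ih as loc (s+1) 0 Hnew (by have := H.sk; omega)
          exact this
        · rw [if_neg h2]
          have hexf := exists_unlocated_fiber (v := cur k as s) y H.corr H.nd (by omega)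
          obtain ⟨pw, hpw1, hpw2, hpw3⟩ := hexf
          have hpwlo : lo ≤ pw := by
            by_contra hcon
            push_neg at hcon
            exact hpw3 (H.curI pw hcon hpw2)
          by_cases h3 : lo + 2 ≤ n
          · rw [if_pos h3]
            constructor
            · exact ⟨H, h3, le_refl n, hlen3, pw, hpwlo, hpw1, hpw1, hpw2⟩
            · simp only [Phi]
              have hclog : Nat.clog 2 (n - lo) ≤ Nat.clog 2 n :=
                Nat.clog_mono_right 2 (by omega)
              have hmul : (n - 2 - loc.length) * Nat.clog 2 n
                  = (n - 3 - loc.length) * Nat.clog 2 n + Nat.clog 2 n := by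
                rw [show n - 2 - loc.length = (n - 3 - loc.length) + 1 from by omega,
                  add_mul, one_mul]
              omega
          · rw [if_neg h3]
            have hpwlo2 : pw = lo := by omega
            have Hnew : AdvPre y as (loc ++ [(lo, cur k as s)]) s (lo + 1) :=
              adv_locate y H (by omega) (by rw [← hpwlo2]; exact hpw2)
                (by rw [← hpwlo2]; exact hpw3) hlen3
            have hrec := ih as (loc ++ [(lo, cur k as s)]) s (lo + 1) Hnew (by
              rw [List.length_append, List.length_cons, List.length_nil]
              omega)
            refine ⟨hrec.1, le_trans hrec.2 ?_⟩
            have hmono : (n - 2 - (loc ++ [(lo, cur k as s)]).length) * Nat.clog 2 n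
                ≤ (n - 2 - loc.length) * Nat.clog 2 n :=
              Nat.mul_le_mul_right _ (by
                rw [List.length_append, List.length_cons, List.length_nil]
                omega)
            omega

lemma clog_half {d : ℕ} (hd : 2 ≤ d) : Nat.clog 2 ((d+1)/2) + 1 = Nat.clog 2 d := by
  rw [Nat.clog_of_two_le (by norm_num) hd]
  have : d + 2 - 1 = d + 1 := by omega
  rw [this]

/-! ### one step of the game preserves the invariant and decreases Φ -/

lemma step_ok (hn : 2 ≤ n) (hk : n < k) (y : Fin n → Fin k) (hy : Function.Injective y)
    (st : St n k) (hInv : Inv y st) (hne : query hk st ≠ y) :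
    Inv y (update hk st (black (query hk st) y)) ∧
      Phi n (update hk st (black (query hk st) y)) < Phi n st := by
  have hk0 : 0 < k := Nat.lt_of_le_of_lt (Nat.zero_le _) hk
  match st with
  | .scan c as =>
      simp only [Inv] at hInv
      obtain ⟨hck, hAs⟩ := hInv
      simp only [query, update]
      have hx : black (sig hk c) y = Af y c := black_sig hk y (by omega)
      by_cases hc2 : c + 2 < k
      · rw [if_pos hc2]
        refine ⟨⟨by omega, ?_⟩, ?_⟩
        · rw [List.range_succ, List.map_append, ← hAs, hx]
          simp
        · simp only [Phi]
          omega
      · rw [if_neg hc2]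
        have hck2 : c = k - 2 := by omega
        have hAs2 : as ++ [black (sig hk c) y] = (List.range (k-1)).map (Af y) := by
          rw [hx, hAs, show k - 1 = c + 1 from by omega, List.range_succ, List.map_append]
          simp
        have Hpre : AdvPre y (as ++ [black (sig hk c) y]) [] 1 0 :=
          { asI := hAs2
            corr := by simp
            nd := by simp
            fut := by simp
            s1 := le_refl 1
            sk := by omega
            full := by intro p t _ h1 h2 _; omega
            curI := by intro p hp _; exact absurd hp (by omega)
            curHi := by simp
            lenle := by simpa using hn }
        have := adv_ok hk y hy (n + k) (as ++ [black (sig hk c) y]) [] 1 0 Hpre (by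
          simp only [List.length_nil]
          omega)
        refine ⟨this.1, lt_of_le_of_lt this.2 ?_⟩
        simp only [Phi, List.length_nil, Nat.sub_zero]
        omega
  | .guess cs =>
      simp only [Inv] at hInv
      simp only [query, update] at hne ⊢
      match cs with
      | [] => exact absurd hInv List.not_mem_nil
      | a :: tl =>
          simp only [List.headD_cons] at hne
          have hmem : y ∈ tl := by
            rcases List.mem_cons.mp hInv with h | h
            · exact absurd h.symm hne
            · exact h
          refine ⟨hmem, ?_⟩
          simp only [Phi, List.tail_cons, List.length_cons]
          omega
  | .srch as loc s lo hi =>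
      simp only [Inv] at hInv
      obtain ⟨H, hlo2, hhin, hlen3, pw, hpw1, hpw2, hpw3, hpw4⟩ := hInv
      have he0 := e0_spec hk y H.asI
      have hcur : cur k as s < k := Nat.mod_lt _ hk0
      have haOfc : aOf n as (cur k as s) = Af y (cur k as s) := aOf_eq hk y H.asI hcur
      have hjlo : lo < (lo+hi)/2 := by omega
      have hjhi : (lo+hi)/2 < hi := by omega
      set j := (lo+hi)/2 with hj
      -- the answer
      have hx : black (hyb hk (cur k as s) j) y
          = Bel y ((cur k as s + (k-1)) % k) j + (Af y (cur k as s) - Bel y (cur k as s) j) :=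
        black_hyb hk y hcur
      -- previous-shift count is known
      have hprevE : (cur k as s + (k-1)) % k = (e0 as + (s-1)) % k := by
        unfold cur
        rw [Nat.mod_add_mod, show e0 as + s + (k-1) = (e0 as + (s-1)) + k from by
          have := H.s1; omega, Nat.add_mod_right]
      have hcntprev : cntB loc ((cur k as s + (k-1)) % k) j
          = Bel y ((cur k as s + (k-1)) % k) j := by
        rcases Nat.lt_or_ge s 2 with hs2 | hs2
        · have hs1 : s = 1 := by have := H.s1; omega
          have hpe : (cur k as s + (k-1)) % k = e0 as := by
            rw [hprevE, hs1]
            simpa using Nat.mod_eq_of_lt he0.1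
          rw [hpe]
          rw [cntB_zero y j H.corr he0.2]
          have h1 := Bel_le_Af y (e0 as) j
          omega
        · apply cntB_full y j H.corr H.nd
          intro p hp hφ
          apply H.full p (s-1) hp (by omega) (by omega)
          rw [hφ, hprevE]
      -- current count is Bel at lo
      have hcnt : cntB loc (cur k as s) n = Bel y (cur k as s) lo :=
        cntS_cur y H.corr H.nd H.curI H.curHi
      have hBle : Bel y (cur k as s) j ≤ Af y (cur k as s) := Bel_le_Af y _ j
      have hBmono : Bel y (cur k as s) lo ≤ Bel y (cur k as s) j :=
        Bel_mono y _ (by omega)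
      -- the computed value
      have hu : cntB loc ((cur k as s + (k-1)) % k) j + aOf n as (cur k as s)
            - black (hyb hk (cur k as s) j) y = Bel y (cur k as s) j := by
        rw [hcntprev, haOfc, hx]
        omega
      have hd2 : 2 ≤ hi - lo := by omega
      have hclog1 : 1 ≤ Nat.clog 2 (hi - lo) := Nat.clog_pos (by norm_num) hd2
      have hclogj : Nat.clog 2 (j - lo) + 1 ≤ Nat.clog 2 (hi - lo) := by
        rw [← clog_half hd2]
        have : j - lo ≤ (hi - lo + 1) / 2 := by omega
        have := Nat.clog_mono_right 2 this
        omega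
      have hcloghj : Nat.clog 2 (hi - j) + 1 ≤ Nat.clog 2 (hi - lo) := by
        rw [← clog_half hd2]
        have : hi - j ≤ (hi - lo + 1) / 2 := by omega
        have := Nat.clog_mono_right 2 this
        omega
      simp only [query, update]
      simp only [← hj]
      simp only [hu, hcnt]
      by_cases hbr : Bel y (cur k as s) lo + 1 ≤ Bel y (cur k as s) j
      · rw [if_pos hbr]
        obtain ⟨pn, hpn1, hpn2, hpn3, hpn4⟩ := exists_between (v := cur k as s) (a := lo) (b := j) y (by omega)
        by_cases hlj : lo + 2 ≤ j
        · rw [if_pos hlj]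
          refine ⟨⟨H, hlj, by omega, hlen3, pn, hpn1, hpn2, hpn3, hpn4⟩, ?_⟩
          simp only [Phi]
          omega
        · rw [if_neg hlj]
          have hpnlo : pn = lo := by omega
          have Hnew : AdvPre y as (loc ++ [(lo, cur k as s)]) s (lo + 1) :=
            adv_locate y H (by omega) (by rw [← hpnlo]; exact hpn4) (by
              intro hmem
              have := H.curHi
              rw [List.mem_map] at hmem
              obtain ⟨pr, hpr, hpr2⟩ := hmem
              have h5 := (H.corr pr hpr).2
              have h6 := H.curHi pr hpr (by rw [← h5, hpr2, ← hpnlo]; exact hpn4)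
              omega) hlen3
          have hrec := adv_ok hk y hy (n+k) as (loc ++ [(lo, cur k as s)]) s (lo+1) Hnew (by
            rw [List.length_append, List.length_cons, List.length_nil]
            have := H.s1
            omega)
          refine ⟨hrec.1, lt_of_le_of_lt hrec.2 ?_⟩
          simp only [Phi, List.length_append, List.length_cons, List.length_nil]
          have : (n - 2 - (loc.length + 0 + 1)) = n - 3 - loc.length := by omega
          rw [this]
          omega
      · rw [if_neg hbr]
        have hBeq : Bel y (cur k as s) j = Bel y (cur k as s) lo := by omega
        have hpwj : j ≤ pw := by
          by_contra hcon
          push_neg at hcon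
          have := between_lt y hpw1 hcon hpw3 hpw4
          omega
        have Hnew : AdvPre y as loc s j :=
          { asI := H.asI, corr := H.corr, nd := H.nd, fut := H.fut, s1 := H.s1, sk := H.sk
            full := H.full
            curI := by
              intro p hplt hφ
              rcases Nat.lt_or_ge p lo with hlt | hge
              · exact H.curI p hlt hφ
              · exfalso
                have hpn : p < n := by omega
                have := between_lt y hge hplt hpn hφ
                omega
            curHi := by
              intro pr hpr hcon
              have := H.curHi pr hpr hcon
              omega
            lenle := H.lenle }
        by_cases hjh : j + 2 ≤ hi
        · rw [if_pos hjh]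
          refine ⟨⟨Hnew, hjh, hhin, hlen3, pw, hpwj, hpw2, hpw3, hpw4⟩, ?_⟩
          simp only [Phi]
          omega
        · rw [if_neg hjh]
          have hpwj2 : pw = j := by omega
          have Hnew2 : AdvPre y as (loc ++ [(j, cur k as s)]) s (j + 1) :=
            adv_locate y Hnew (by omega) (by rw [← hpwj2]; exact hpw4) (by
              intro hmem
              rw [List.mem_map] at hmem
              obtain ⟨pr, hpr, hpr2⟩ := hmem
              have h5 := (H.corr pr hpr).2
              have h6 := H.curHi pr hpr (by rw [← h5, hpr2, ← hpwj2]; exact hpw4)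
              omega) hlen3
          have hrec := adv_ok hk y hy (n+k) as (loc ++ [(j, cur k as s)]) s (j+1) Hnew2 (by
            rw [List.length_append, List.length_cons, List.length_nil]
            have := H.s1
            omega)
          refine ⟨hrec.1, lt_of_le_of_lt hrec.2 ?_⟩
          simp only [Phi, List.length_append, List.length_cons, List.length_nil]
          have : (n - 2 - (loc.length + 0 + 1)) = n - 3 - loc.length := by omega
          rw [this]
          omega

/-! ### all queries are injective -/

def GoodSt : St n k → Prop
  | .guess cs => ∀ f ∈ cs, Function.Injective f
  | _ => True

lemma good_advance (hk : n < k) :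
    ∀ (fuel : ℕ) (as : List ℕ) (loc : List (ℕ × ℕ)) (s lo : ℕ),
      GoodSt (advance hk as loc s lo fuel) := by
  intro fuel
  induction fuel with
  | zero =>
      intro as loc s lo
      simp only [advance, GoodSt]
      intro f hf
      exact absurd hf List.not_mem_nil
  | succ fuel ih =>
      intro as loc s lo
      simp only [advance]
      by_cases h1 : n ≤ loc.length + 2
      · rw [if_pos h1]
        simp only [GoodSt]
        intro f hf
        unfold mkCands at hf
        rw [List.mem_filter] at hf
        simpa using hf.2
      · rw [if_neg h1]
        by_cases h2 : aOf n as (cur k as s) ≤ cntB loc (cur k as s) n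
        · rw [if_pos h2]; exact ih as loc (s+1) 0
        · rw [if_neg h2]
          by_cases h3 : lo + 2 ≤ n
          · rw [if_pos h3]; simp only [GoodSt]
          · rw [if_neg h3]; exact ih as (loc ++ [(lo, cur k as s)]) s (lo+1)

lemma good_update (hk : n < k) (st : St n k) (x : ℕ) (h : GoodSt st) :
    GoodSt (update hk st x) := by
  match st with
  | .scan c as =>
      simp only [update]
      by_cases h1 : c + 2 < k
      · rw [if_pos h1]; simp only [GoodSt]
      · rw [if_neg h1]; exact good_advance hk _ _ _ _ _
  | .srch as loc s lo hi =>
      simp only [update]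
      by_cases h1 : cntB loc (cur k as s) n + 1 ≤
          cntB loc ((cur k as s + (k-1)) % k) ((lo+hi)/2) + aOf n as (cur k as s) - x
      · rw [if_pos h1]
        by_cases h2 : lo + 2 ≤ (lo+hi)/2
        · rw [if_pos h2]; simp only [GoodSt]
        · rw [if_neg h2]; exact good_advance hk _ _ _ _ _
      · rw [if_neg h1]
        by_cases h2 : (lo+hi)/2 + 2 ≤ hi
        · rw [if_pos h2]; simp only [GoodSt]
        · rw [if_neg h2]; exact good_advance hk _ _ _ _ _
  | .guess cs =>
      simp only [update, GoodSt]
      intro f hf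
      exact h f (List.mem_of_mem_tail hf)

lemma good_foldl (hk : n < k) (h : List ℕ) :
    GoodSt (h.foldl (update hk) (init : St n k)) := by
  have hgen : ∀ (l : List ℕ) (st : St n k), GoodSt st → GoodSt (l.foldl (update hk) st) := by
    intro l
    induction l with
    | nil => intro st h; exact h
    | cons a l ihl =>
        intro st hst
        exact ihl _ (good_update hk st a hst)
  exact hgen h init (by simp only [init, GoodSt])

lemma query_inj_of_good (hk : n < k) (st : St n k) (h : GoodSt st) :
    Function.Injective (query hk st) := by
  match st with
  | .scan c as => exact sig_inj hk c
  | .srch as loc s lo hi => exact hyb_inj hk _ _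
  | .guess cs =>
      match cs with
      | [] => exact sig_inj hk 0
      | a :: tl =>
          simp only [query, List.headD_cons]
          exact h a (List.mem_cons_self)

/-! ### the play -/

def stepf (hk : n < k) (y : Fin n → Fin k) (st : St n k) : St n k :=
  update hk st (black (query hk st) y)

def iter (hk : n < k) (y : Fin n → Fin k) : St n k → ℕ → St n k
  | st, 0 => st
  | st, i+1 => iter hk y (stepf hk y st) i

lemma iter_succ (hk : n < k) (y : Fin n → Fin k) (st : St n k) (i : ℕ) :
    iter hk y st (i+1) = stepf hk y (iter hk y st i) := by
  induction i generalizing st with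
  | zero => rfl
  | succ i ih =>
      show iter hk y (stepf hk y st) (i+1) = _
      rw [ih]
      rfl

lemma phi_pos (y : Fin n → Fin k) (st : St n k) (hI : Inv y st) : 1 ≤ Phi n st := by
  match st with
  | .scan c as => simp only [Phi]; omega
  | .srch as loc s lo hi => simp only [Phi]; omega
  | .guess cs =>
      simp only [Phi]
      simp only [Inv] at hI
      have := List.length_pos_iff.mpr (List.ne_nil_of_mem hI)
      omega

lemma descend (hn : 2 ≤ n) (hk : n < k) (y : Fin n → Fin k) (hy : Function.Injective y) :
    ∀ (m : ℕ) (st : St n k), Phi n st ≤ m → Inv y st →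
      ∃ i, i < Phi n st ∧ query hk (iter hk y st i) = y := by
  intro m
  induction m with
  | zero =>
      intro st hP hI
      have := phi_pos y st hI
      omega
  | succ m ih =>
      intro st hP hI
      by_cases hq : query hk st = y
      · exact ⟨0, by have := phi_pos y st hI; omega, hq⟩
      · obtain ⟨hI2, hP2⟩ := step_ok hn hk y hy st hI hq
        obtain ⟨i, hi1, hi2⟩ := ih (stepf hk y st) (by
          show Phi n (update hk st (black (query hk st) y)) ≤ m
          omega) (by
          show Inv y (update hk st (black (query hk st) y))
          exact hI2)
        refine ⟨i+1, ?_, hi2⟩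
        have : Phi n (stepf hk y st) < Phi n st := hP2
        omega

lemma foldl_hist (hn : 2 ≤ n) (hk : n < k) (y : Fin n → Fin k) :
    ∀ t, (hist (strat hk) y t).foldl (update hk) init = iter hk y init t := by
  intro t
  induction t with
  | zero => rfl
  | succ t ih =>
      show ((hist (strat hk) y t) ++ [black (strat hk (hist (strat hk) y t)) y]).foldl
          (update hk) init = iter hk y init (t+1)
      rw [List.foldl_append, ih, iter_succ]
      simp only [List.foldl_cons, List.foldl_nil]
      have : strat hk (hist (strat hk) y t) = query hk (iter hk y init t) := by
        rw [show strat hk (hist (strat hk) y t)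
            = query hk ((hist (strat hk) y t).foldl (update hk) init) from rfl, ih]
      rw [this]
      rfl

end MM

/-- Black-Peg AB-Mastermind with `k > n` colors can be solved with at most
`(n - 2)⌈log₂ n⌉ + k + 1` queries (`Nat.clog 2 n = ⌈log₂ n⌉`); note that the query
`q_{t+1} = s (hist s y t)` is the `(t+1)`-st query, so `t < B` means that the code is
broken within the first `B` queries. -/
theorem stmt15 (n k : ℕ) (hn : 2 ≤ n) (hk : n < k) :
    ∃ s : List ℕ → Fin n → Fin k,
      (∀ h : List ℕ, Function.Injective (s h)) ∧
      ∀ y : Fin n → Fin k, Function.Injective y →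
        ∃ t < (n - 2) * Nat.clog 2 n + k + 1, s (hist s y t) = y := by
  refine ⟨MM.strat hk, ?_, ?_⟩
  · intro h
    exact MM.query_inj_of_good hk _ (MM.good_foldl hk h)
  · intro y hy
    have hinit : MM.Inv y (MM.init : MM.St n k) := by
      refine ⟨by omega, ?_⟩
      simp
    have hPhi : MM.Phi n (MM.init : MM.St n k) = (n-2) * Nat.clog 2 n + k + 1 := by
      simp only [MM.Phi, MM.init]
      omega
    obtain ⟨i, hi1, hi2⟩ := MM.descend hn hk y hy (MM.Phi n (MM.init : MM.St n k))
      MM.init le_rfl hinit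
    refine ⟨i, by omega, ?_⟩
    show MM.query hk ((hist (MM.strat hk) y i).foldl (MM.update hk) MM.init) = y
    rw [MM.foldl_hist hn hk y i]
    exact hi2
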